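/- (Jacobi's theorem for m = 2, principal 2×2 minor of the adjugate) Let R be a commutative ring, let A be an (n+2)×(n+2) matrix over R with adjugate A', and let p, q be two distinct indices. Then A'_{pp} · A'_{qq} − A'_{pq} · A'_{qp} = det(A) · det(B), where B is the n×n complementary minor of A obtained by deleting rows p and q and columns p and q from A. -/

import Mathlib

open Matrix

lemma jacobi_key {α : Type*} [CommRing α] {n : ℕ}
    (A : Matrix (Fin (n + 2)) (Fin (n + 2)) α) (p q : Fin (n + 2)) (hpq : p ≠ q)
    (e : Fin n → Fin (n + 2)) (hinj : Function.Injective e)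
    (hrange : Set.range e = ({p, q} : Set (Fin (n + 2)))ᶜ) :
    A.det * (A.adjugate p p * A.adjugate q q - A.adjugate p q * A.adjugate q p) =
      A.det ^ 2 * (A.submatrix e e).det := by
  have hep : ∀ i, e i ≠ p := by
    intro i h
    have : e i ∈ Set.range e := ⟨i, rfl⟩
    rw [hrange, h] at this
    exact this (Or.inl rfl)
  have heq : ∀ i, e i ≠ q := by
    intro i h
    have : e i ∈ Set.range e := ⟨i, rfl⟩
    rw [hrange, h] at this
    exact this (Or.inr rfl)
  -- the equivalence
  have hfinj : Function.Injective (Sum.elim e ![p, q]) := by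
    rintro (a | a) (b | b) h
    · exact congrArg _ (hinj h)
    · exfalso
      simp only [Sum.elim_inl, Sum.elim_inr] at h
      fin_cases b
      · exact hep a (by simpa using h)
      · exact heq a (by simpa using h)
    · exfalso
      simp only [Sum.elim_inl, Sum.elim_inr] at h
      fin_cases a
      · exact hep b (by simpa using h.symm)
      · exact heq b (by simpa using h.symm)
    · have h' : (![p, q]) a = ![p, q] b := h
      fin_cases a <;> fin_cases b <;> simp_all
  have hfsurj : Function.Surjective (Sum.elim e ![p, q]) := by
    intro x
    by_cases hx : x = p
    · exact ⟨Sum.inr 0, by simp [hx]⟩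
    by_cases hx' : x = q
    · exact ⟨Sum.inr 1, by simp [hx']⟩
    have : x ∈ Set.range e := by
      rw [hrange]
      intro hmem
      rcases hmem with h | h
      · exact hx h
      · exact hx' h
    obtain ⟨i, hi⟩ := this
    exact ⟨Sum.inl i, hi⟩
  let σ : Fin n ⊕ Fin 2 ≃ Fin (n + 2) := Equiv.ofBijective _ ⟨hfinj, hfsurj⟩
  have hσl : ∀ i, σ (Sum.inl i) = e i := fun i => rfl
  have hσr : ∀ x : Fin 2, σ (Sum.inr x) = ![p, q] x := fun x => rfl
  -- the auxiliary matrix C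
  set C : Matrix (Fin (n + 2)) (Fin (n + 2)) α := Matrix.of fun i k =>
    if k = p then A.adjugate i p else if k = q then A.adjugate i q
    else (1 : Matrix (Fin (n + 2)) (Fin (n + 2)) α) i k with hC
  have hCp : ∀ j, C j p = A.adjugate j p := fun j => if_pos rfl
  have hCq : ∀ j, C j q = A.adjugate j q := fun j =>
    (if_neg (Ne.symm hpq)).trans (if_pos rfl)
  have hCe : ∀ j k, k ≠ p → k ≠ q → C j k = (1 : Matrix _ _ α) j k := fun j k h1 h2 =>
    (if_neg h1).trans (if_neg h2)
  have hACp : ∀ i, (A * C) i p = A.det * (1 : Matrix (Fin (n+2)) (Fin (n+2)) α) i p := by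
    intro i
    calc (A * C) i p = ∑ j, A i j * C j p := mul_apply
      _ = ∑ j, A i j * A.adjugate j p := by simp_rw [hCp]
      _ = (A * A.adjugate) i p := (mul_apply).symm
      _ = _ := by rw [mul_adjugate, Matrix.smul_apply, smul_eq_mul]
  have hACq : ∀ i, (A * C) i q = A.det * (1 : Matrix (Fin (n+2)) (Fin (n+2)) α) i q := by
    intro i
    calc (A * C) i q = ∑ j, A i j * C j q := mul_apply
      _ = ∑ j, A i j * A.adjugate j q := by simp_rw [hCq]
      _ = (A * A.adjugate) i q := (mul_apply).symm
      _ = _ := by rw [mul_adjugate, Matrix.smul_apply, smul_eq_mul]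
  have hACe : ∀ i k, k ≠ p → k ≠ q → (A * C) i k = A i k := by
    intro i k h1 h2
    calc (A * C) i k = ∑ j, A i j * C j k := mul_apply
      _ = ∑ j, A i j * (1 : Matrix (Fin (n+2)) (Fin (n+2)) α) j k := by
          simp_rw [hCe _ _ h1 h2]
      _ = (A * (1 : Matrix (Fin (n+2)) (Fin (n+2)) α)) i k := (mul_apply).symm
      _ = A i k := by rw [mul_one]
  -- determinant of C
  have hdetC : C.det = A.adjugate p p * A.adjugate q q - A.adjugate p q * A.adjugate q p := by
    rw [← det_submatrix_equiv_self σ C]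
    have hblock : C.submatrix σ σ =
        fromBlocks 1 (Matrix.of fun i j => A.adjugate (e i) (![p, q] j)) 0
          !![A.adjugate p p, A.adjugate p q; A.adjugate q p, A.adjugate q q] := by
      ext (i | i) (j | j)
      · rw [submatrix_apply, hσl, hσl, fromBlocks_apply₁₁,
          hCe _ _ (hep j) (heq j), one_apply, one_apply]
        simp [hinj.eq_iff]
      · rw [submatrix_apply, hσl, hσr, fromBlocks_apply₁₂, of_apply]
        fin_cases j
        · simpa using hCp (e i)
        · simpa using hCq (e i)
      · rw [submatrix_apply, hσr, hσl, fromBlocks_apply₂₁,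
          hCe _ _ (hep j) (heq j), Matrix.zero_apply]
        fin_cases i
        · exact one_apply_ne (Ne.symm (hep j))
        · exact one_apply_ne (Ne.symm (heq j))
      · rw [submatrix_apply, hσr, hσr, fromBlocks_apply₂₂]
        fin_cases i <;> fin_cases j <;>
          simp [hCp, hCq, hpq, Ne.symm hpq]
    rw [hblock, det_fromBlocks_zero₂₁, det_one, one_mul, det_fin_two_of]
  -- determinant of A * C
  have hdetAC : (A * C).det = (A.submatrix e e).det * A.det ^ 2 := by
    rw [← det_submatrix_equiv_self σ (A * C)]
    have hblock : (A * C).submatrix σ σ =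
        fromBlocks (A.submatrix e e) 0 (Matrix.of fun i j => A (![p, q] i) (e j))
          (A.det • (1 : Matrix (Fin 2) (Fin 2) α)) := by
      ext (i | i) (j | j)
      · rw [submatrix_apply, hσl, hσl, fromBlocks_apply₁₁,
          hACe _ _ (hep j) (heq j), submatrix_apply]
      · rw [submatrix_apply, hσl, hσr, fromBlocks_apply₁₂, Matrix.zero_apply]
        fin_cases j
        · simpa [one_apply_ne (hep i)] using hACp (e i)
        · simpa [one_apply_ne (heq i)] using hACq (e i)
      · rw [submatrix_apply, hσr, hσl, fromBlocks_apply₂₁,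
          hACe _ _ (hep j) (heq j), of_apply]
      · rw [submatrix_apply, hσr, hσr, fromBlocks_apply₂₂, Matrix.smul_apply, smul_eq_mul]
        fin_cases i <;> fin_cases j
        · simpa using hACp p
        · simpa [one_apply_ne hpq] using hACq p
        · simpa [one_apply_ne (Ne.symm hpq)] using hACp q
        · simpa using hACq q
    rw [hblock, det_fromBlocks_zero₁₂, det_smul, det_one, mul_one]
    norm_num
  have h := det_mul A C
  rw [hdetC, hdetAC] at h
  linear_combination -h

/-- Jacobi's theorem for m = 2: principal 2×2 minor of the adjugate. -/
theorem jacobi_m_two_principal {R : Type*} [CommRing R] {n : ℕ}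
    (A : Matrix (Fin (n + 2)) (Fin (n + 2)) R) (p q : Fin (n + 2)) (hpq : p ≠ q)
    (e : Fin n → Fin (n + 2)) (he : StrictMono e)
    (hrange : Set.range e = ({p, q} : Set (Fin (n + 2)))ᶜ) :
    A.adjugate p p * A.adjugate q q - A.adjugate p q * A.adjugate q p =
      A.det * (A.submatrix e e).det := by
  let A' := mvPolynomialX (Fin (n + 2)) (Fin (n + 2)) ℤ
  have key : A'.adjugate p p * A'.adjugate q q - A'.adjugate p q * A'.adjugate q p =
      A'.det * (A'.submatrix e e).det := by
    apply mul_left_cancel₀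
      (show A'.det ≠ 0 from det_mvPolynomialX_ne_zero (Fin (n + 2)) ℤ)
    rw [jacobi_key A' p q hpq e he.injective hrange]
    ring
  let φ : MvPolynomial (Fin (n + 2) × Fin (n + 2)) ℤ →ₐ[ℤ] R :=
    MvPolynomial.aeval fun pr : Fin (n + 2) × Fin (n + 2) => A pr.1 pr.2
  have hmap : φ (A'.adjugate p p * A'.adjugate q q - A'.adjugate p q * A'.adjugate q p) =
      φ (A'.det * (A'.submatrix e e).det) := congrArg _ key
  have hA : φ.mapMatrix A' = A := mvPolynomialX_mapMatrix_aeval ℤ A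
  have hadj : ∀ i j, φ (A'.adjugate i j) = A.adjugate i j := by
    intro i j
    have := congrFun (congrFun (congrArg Matrix.of
      (congrArg Matrix.adjugate hA).symm) i) j
    calc φ (A'.adjugate i j) = (φ.mapMatrix A'.adjugate) i j := rfl
      _ = (Matrix.adjugate (φ.mapMatrix A')) i j := by rw [AlgHom.map_adjugate]
      _ = A.adjugate i j := by rw [hA]
  have hdet : φ A'.det = A.det := by rw [AlgHom.map_det, hA]
  have hsub : φ (A'.submatrix e e).det = (A.submatrix e e).det := by
    have : φ.mapMatrix (A'.submatrix e e) = (φ.mapMatrix A').submatrix e e := rfl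
    rw [AlgHom.map_det, this, hA]
  simp only [map_sub, _root_.map_mul, hadj, hdet, hsub] at hmap
  exact hmap
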